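/- Let a_0 < a_1 < ⋯ < a_n be real numbers, let c_{a_0}, …, c_{a_n} > 0 and l > 0, and let β_{a_i} be the GT-Bernstein basis functions. Then for every strictly increasing sequence a_0 < t_0 < t_1 < ⋯ < t_n < a_n, the determinant of the collocation matrix B = [β_{a_j}(t_i)]_{i,j=0}^{n} is strictly positive; in particular, B is nonsingular. -/

import Mathlib

/-- The GT-Bernstein basis functions
`β_{a_i}(t) = c_{a_i} (l(t − a_0))^{l(a_i − a_0)} (l(a_n − t))^{l(a_n − a_i)}`,
where powers are real powers (`Real.rpow`, which satisfies `0 ^ 0 = 1`). -/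
noncomputable def gtBernstein (n : ℕ) (a c : Fin (n + 1) → ℝ) (l : ℝ)
    (i : Fin (n + 1)) (t : ℝ) : ℝ :=
  c i * (l * (t - a 0)) ^ (l * (a i - a 0)) *
    (l * (a (Fin.last n) - t)) ^ (l * (a (Fin.last n) - a i))

section Helpers
open Real Finset


lemma exp_poly_vanish : ∀ (m : ℕ) (p c : Fin m → ℝ), Function.Injective p →
    ∀ (x : Fin m → ℝ), StrictMono x →
    (∀ i, ∑ j, c j * Real.exp (p j * x i) = 0) → ∀ j, c j = 0 := by
  intro m
  induction m with
  | zero => intro p c _ x _ _ j; exact j.elim0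
  | succ m ih =>
    intro p c hp x hx hvan
    set q : Fin (m + 1) → ℝ := fun j => p j - p 0 with hq
    set f : ℝ → ℝ := fun y => ∑ j, c j * Real.exp (q j * y) with hf
    have hderiv : ∀ y : ℝ, HasDerivAt f (∑ j, c j * q j * Real.exp (q j * y)) y := by
      intro y
      apply HasDerivAt.fun_sum
      intro j _
      have h1 : HasDerivAt (fun y : ℝ => Real.exp (q j * y)) (q j * Real.exp (q j * y)) y := by
        have := (Real.hasDerivAt_exp (q j * y)).comp y ((hasDerivAt_id y).const_mul (q j))
        simpa [Function.comp_def, mul_comm] using this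
      simpa [mul_comm, mul_assoc, mul_left_comm] using h1.const_mul (c j)
    have hfz : ∀ i, f (x i) = 0 := by
      intro i
      have : f (x i) = Real.exp (-(p 0) * x i) * ∑ j, c j * Real.exp (p j * x i) := by
        rw [Finset.mul_sum]
        refine Finset.sum_congr rfl fun j _ => ?_
        rw [mul_comm (Real.exp _), mul_assoc, ← Real.exp_add]
        simp only [hq]
        ring_nf
      rw [this, hvan i, mul_zero]
    -- Rolle on each interval
    have hroll : ∀ i : Fin m, ∃ y ∈ Set.Ioo (x i.castSucc) (x i.succ),
        (∑ j, c j * q j * Real.exp (q j * y)) = 0 := by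
      intro i
      exact exists_hasDerivAt_eq_zero (hx (Fin.castSucc_lt_succ (i := i)))
        (Continuous.continuousOn (by fun_prop)) (by rw [hfz, hfz])
        (fun y _ => hderiv y)
    choose y hy hgy using hroll
    have hymono : StrictMono y := by
      intro i i' hii
      calc y i < x i.succ := (hy i).2
        _ ≤ x i'.castSucc := by
            apply hx.monotone
            have h1 : (i : ℕ) < i' := hii
            simp only [Fin.le_def, Fin.coe_castSucc, Fin.val_succ]
            omega
        _ < y i' := (hy i').1
    have hsum : ∀ i : Fin m, ∑ j : Fin m, (c j.succ * q j.succ) * Real.exp ((q j.succ) * y i) = 0 := by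
      intro i
      have := hgy i
      rw [Fin.sum_univ_succ] at this
      simpa [hq] using this
    have hqinj : Function.Injective fun j : Fin m => q j.succ := by
      intro j j' h
      simp only [hq, sub_left_inj] at h
      exact Fin.succ_injective _ (hp h)
    have hzero := ih (fun j => q j.succ) (fun j => c j.succ * q j.succ) hqinj y hymono hsum
    have hcsucc : ∀ j : Fin m, c j.succ = 0 := by
      intro j
      have hqne : q j.succ ≠ 0 := by
        simp only [hq, sub_ne_zero]
        exact fun h => Fin.succ_ne_zero j (hp h)
      have := hzero j
      rcases mul_eq_zero.1 this with h | h
      · exact h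
      · exact absurd h hqne
    intro j
    refine Fin.cases ?_ hcsucc j
    have h0 := hvan 0
    rw [Fin.sum_univ_succ] at h0
    simp only [hcsucc, zero_mul, Finset.sum_const_zero, add_zero] at h0
    have := Real.exp_pos (p 0 * x 0)
    nlinarith [h0, this]

lemma exp_det_ne_zero {n : ℕ} (p v : Fin (n + 1) → ℝ) (hp : Function.Injective p)
    (hv : StrictMono v) :
    (Matrix.of fun i j : Fin (n + 1) => Real.exp (p j * v i)).det ≠ 0 := by
  intro hdet
  obtain ⟨c, hc0, hmc⟩ := (Matrix.exists_mulVec_eq_zero_iff).2 hdet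
  have hvan : ∀ i, ∑ j, c j * Real.exp (p j * v i) = 0 := by
    intro i
    have := congrFun hmc i
    simpa [Matrix.mulVec, dotProduct, mul_comm] using this
  exact hc0 (funext (exp_poly_vanish (n + 1) p c hp v hv hvan))

lemma exp_det_pos : ∀ (n : ℕ) (p v : Fin (n + 1) → ℝ), StrictMono p → StrictMono v →
    0 < (Matrix.of fun i j : Fin (n + 1) => Real.exp (p j * v i)).det := by
  intro n
  induction n with
  | zero =>
    intro p v _ _
    rw [Matrix.det_fin_one]
    exact Real.exp_pos _
  | succ n ih =>
    intro p v hp hv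
    -- h x : determinant with the last point replaced by x
    set w : ℝ → Fin (n + 2) → ℝ := fun x => Fin.snoc (fun i : Fin (n + 1) => v i.castSucc) x
      with hw
    set h : ℝ → ℝ := fun x => (Matrix.of fun i j : Fin (n + 2) => Real.exp (p j * w x i)).det
      with hh
    -- cofactors
    set K : Fin (n + 2) → ℝ := fun j => (-1 : ℝ) ^ ((n + 1) + (j : ℕ)) *
      (Matrix.of fun i j' : Fin (n + 1) =>
        Real.exp (p (j.succAbove j') * v i.castSucc)).det with hK
    have hform : ∀ x, h x = ∑ j, K j * Real.exp (p j * x) := by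
      intro x
      show (Matrix.of fun i j : Fin (n + 2) => Real.exp (p j * w x i)).det = _
      rw [Matrix.det_succ_row _ (Fin.last (n + 1))]
      refine Finset.sum_congr rfl fun j _ => ?_
      have hsub : ((Matrix.of fun i j : Fin (n + 2) => Real.exp (p j * w x i)).submatrix
          (Fin.last (n + 1)).succAbove j.succAbove) =
          (Matrix.of fun i j' : Fin (n + 1) =>
            Real.exp (p (j.succAbove j') * v i.castSucc)) := by
        ext i' j'
        simp [Fin.succAbove_last, hw, Fin.snoc_castSucc]
      rw [hsub]
      simp only [hK, Matrix.of_apply, hw, Fin.snoc_last, Fin.val_last]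
      ring
    have hKlast : 0 < K (Fin.last (n + 1)) := by
      have hmat : (Matrix.of fun i j' : Fin (n + 1) =>
          Real.exp (p ((Fin.last (n + 1)).succAbove j') * v i.castSucc)) =
          (Matrix.of fun i j' : Fin (n + 1) =>
            Real.exp ((p ∘ Fin.castSucc) j' * (v ∘ Fin.castSucc) i)) := by
        ext i' j'
        simp [Fin.succAbove_last]
      have hpos := ih (p ∘ Fin.castSucc) (v ∘ Fin.castSucc)
        (hp.comp Fin.strictMono_castSucc) (hv.comp Fin.strictMono_castSucc)
      rw [hK]
      simp only [Fin.val_last]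
      rw [hmat]
      have : (-1 : ℝ) ^ ((n + 1) + (n + 1)) = 1 := Even.neg_one_pow ⟨n + 1, by ring⟩
      rw [this, one_mul]
      exact hpos
    have hlim : Filter.Tendsto (fun x => h x * Real.exp (-(p (Fin.last (n + 1))) * x))
        Filter.atTop (nhds (K (Fin.last (n + 1)))) := by
      have heq : ∀ x, h x * Real.exp (-(p (Fin.last (n + 1))) * x) =
          ∑ j, K j * Real.exp ((p j - p (Fin.last (n + 1))) * x) := by
        intro x
        rw [hform, Finset.sum_mul]
        refine Finset.sum_congr rfl fun j _ => ?_
        rw [mul_assoc, ← Real.exp_add]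
        ring_nf
      simp only [heq]
      have : K (Fin.last (n + 1)) =
          ∑ j : Fin (n + 2), if j = Fin.last (n + 1) then K (Fin.last (n + 1)) else 0 := by
        rw [Finset.sum_ite_eq' Finset.univ (Fin.last (n + 1))]
        simp
      rw [this]
      apply tendsto_finset_sum
      intro j _
      by_cases hj : j = Fin.last (n + 1)
      · subst hj
        simp only [if_pos rfl, sub_self, zero_mul, Real.exp_zero, mul_one]
        exact tendsto_const_nhds
      · simp only [if_neg hj]
        have hneg : p j - p (Fin.last (n + 1)) < 0 := by
          have : p j < p (Fin.last (n + 1)) := hp (lt_of_le_of_ne (Fin.le_last j) hj)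
          linarith
        have h1 : Filter.Tendsto (fun x : ℝ => (p j - p (Fin.last (n + 1))) * x)
            Filter.atTop Filter.atBot :=
          (Filter.tendsto_const_mul_atBot_of_neg hneg).2 Filter.tendsto_id
        have h2 := Real.tendsto_exp_atBot.comp h1
        have := h2.const_mul (K j)
        simpa using this
    have hcont : Continuous h := by
      have : h = fun x => ∑ j, K j * Real.exp (p j * x) := funext hform
      rw [this]
      fun_prop
    have hne : ∀ x, v ((Fin.last n).castSucc) < x → h x ≠ 0 := by
      intro x hxgt
      have hwmono : StrictMono (w x) := by
        intro i j hij
        rcases Fin.exists_castSucc_eq.2 (Fin.ne_last_of_lt hij) with ⟨i', rfl⟩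
        rcases eq_or_ne j (Fin.last (n + 1)) with rfl | hj
        · rw [hw]
          simp only [Fin.snoc_castSucc, Fin.snoc_last]
          calc v i'.castSucc ≤ v (Fin.last n).castSucc :=
                hv.monotone (Fin.castSucc_le_castSucc_iff.2 (Fin.le_last i'))
            _ < x := hxgt
        · rcases Fin.exists_castSucc_eq.2 hj with ⟨j', rfl⟩
          rw [hw]
          simp only [Fin.snoc_castSucc]
          exact hv hij
      exact exp_det_ne_zero p (w x) hp.injective hwmono
    have hgoal : (Matrix.of fun i j : Fin (n + 2) => Real.exp (p j * v i)).det
        = h (v (Fin.last (n + 1))) := by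
      have hwv : w (v (Fin.last (n + 1))) = v := Fin.snoc_init_self v
      show _ = (Matrix.of fun i j : Fin (n + 2) =>
        Real.exp (p j * w (v (Fin.last (n + 1))) i)).det
      rw [hwv]
    set x₀ := v (Fin.last (n + 1)) with hx₀
    have hgt0 : v ((Fin.last n).castSucc) < x₀ := hv (Fin.castSucc_lt_last (Fin.last n))
    have hne0 : h x₀ ≠ 0 := hne x₀ hgt0
    rcases lt_trichotomy (h x₀) 0 with hlt | heq | hgt
    · exfalso
      have hev : ∀ᶠ x in Filter.atTop, 0 < h x * Real.exp (-(p (Fin.last (n + 1))) * x) :=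
        hlim.eventually (eventually_gt_nhds hKlast)
      obtain ⟨X, hX1, hX2⟩ := (hev.and (Filter.eventually_ge_atTop x₀)).exists
      have hhX : 0 < h X := by
        nlinarith [Real.exp_pos (-(p (Fin.last (n + 1))) * X)]
      obtain ⟨cc, hcmem, hc0⟩ := intermediate_value_Icc hX2 hcont.continuousOn
        (Set.mem_Icc.2 ⟨hlt.le, hhX.le⟩)
      exact hne cc (lt_of_lt_of_le hgt0 hcmem.1) hc0
    · exact absurd heq hne0
    · exact hgoal ▸ hgt

end Helpers

/-- For strictly increasing nodes `a 0 < a 1 < ⋯ < a n`, coefficients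
`c i > 0`, `l > 0`, and any strictly increasing sequence
`a 0 < t 0 < t 1 < ⋯ < t n < a n`, the determinant of the collocation matrix
`B = [β_{a_j}(t_i)]` is strictly positive. -/
theorem gtBernstein_collocation_det_pos
    (n : ℕ) (a c : Fin (n + 1) → ℝ) (l : ℝ)
    (ha : StrictMono a) (hc : ∀ i, 0 < c i) (hl : 0 < l)
    (t : Fin (n + 1) → ℝ) (ht : StrictMono t)
    (ht0 : a 0 < t 0) (htn : t (Fin.last n) < a (Fin.last n)) :
    0 < (Matrix.of fun i j : Fin (n + 1) => gtBernstein n a c l j (t i)).det := by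
  set X : Fin (n + 1) → ℝ := fun i => l * (t i - a 0) with hXdef
  set Y : Fin (n + 1) → ℝ := fun i => l * (a (Fin.last n) - t i) with hYdef
  have hX : ∀ i, 0 < X i := fun i =>
    mul_pos hl (by have := ht.monotone (Fin.zero_le i); simp only [sub_pos]; linarith)
  have hY : ∀ i, 0 < Y i := fun i =>
    mul_pos hl (by have := ht.monotone (Fin.le_last i); simp only [sub_pos]; linarith)
  set p : Fin (n + 1) → ℝ := fun j => l * (a j - a 0) with hpdef
  set s : ℝ := l * (a (Fin.last n) - a 0) with hsdef
  set v : Fin (n + 1) → ℝ := fun i => Real.log (X i / Y i) with hvdef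
  have hpm : StrictMono p := by
    intro i j hij
    have := ha hij
    rw [hpdef]
    dsimp only
    nlinarith
  have hvm : StrictMono v := by
    intro i j hij
    rw [hvdef]
    dsimp only
    apply Real.log_lt_log (div_pos (hX i) (hY i))
    have hXij : X i < X j := by
      rw [hXdef]; dsimp only; have := ht hij; nlinarith
    have hYij : Y j < Y i := by
      rw [hYdef]; dsimp only; have := ht hij; nlinarith
    rw [div_lt_div_iff₀ (hY i) (hY j)]
    nlinarith [(hX i), (hY j), hXij, hYij]
  have hE := exp_det_pos n p v hpm hvm
  have key : ∀ i j, gtBernstein n a c l j (t i) = Y i ^ s * Real.exp (p j * v i) * c j := by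
    intro i j
    unfold gtBernstein
    rw [show l * (t i - a 0) = X i from rfl,
      show l * (a (Fin.last n) - t i) = Y i from rfl,
      show l * (a j - a 0) = p j from rfl]
    have h1 : Real.exp (p j * v i) = (X i / Y i) ^ (p j) := by
      rw [Real.rpow_def_of_pos (div_pos (hX i) (hY i)), mul_comm]
    have h2 : Y i ^ (l * (a (Fin.last n) - a j)) = Y i ^ s / Y i ^ p j := by
      rw [← Real.rpow_sub (hY i)]
      congr 1
      rw [hsdef, hpdef]
      ring
    rw [h1, h2, Real.div_rpow (hX i).le (hY i).le]
    have := (Real.rpow_pos_of_pos (hY i) (p j)).ne'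
    field_simp
  have hmat : (Matrix.of fun i j : Fin (n + 1) => gtBernstein n a c l j (t i)) =
      Matrix.diagonal (fun i => Y i ^ s) *
        (Matrix.of fun i j : Fin (n + 1) => Real.exp (p j * v i)) * Matrix.diagonal c := by
    ext i j
    rw [Matrix.mul_diagonal, Matrix.diagonal_mul]
    exact key i j
  rw [hmat, Matrix.det_mul, Matrix.det_mul, Matrix.det_diagonal, Matrix.det_diagonal]
  have h1 : 0 < ∏ i, Y i ^ s :=
    Finset.prod_pos fun i _ => Real.rpow_pos_of_pos (hY i) s
  have h2 : 0 < ∏ i, c i := Finset.prod_pos fun i _ => hc i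
  exact mul_pos (mul_pos h1 hE) h2
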